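/- Let X ⊆ ℝ^m be nonempty, closed, and convex, and let c : ℝ^m → ℝ^m be continuous on X. Let X* ⊆ X be an evolutionarily stable set of (X, c), and let x* ∈ X*. Then x* is ⪯_c-minimal. -/

import Mathlib

open Set

noncomputable section

/-- The path point `y_ε = ε x + (1 - ε) y`. -/
def pathPt {m : ℕ} (x y : EuclideanSpace ℝ (Fin m)) (ε : ℝ) :
    EuclideanSpace ℝ (Fin m) :=
  ε • x + (1 - ε) • y

/-- The linear vector polyorder `x ⪯_c y`: for all `ε ∈ [0,1]`,
`⟨x, c(y_ε)⟩ ≤ ⟨y, c(y_ε)⟩`. -/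
def vecLe {m : ℕ} (c : EuclideanSpace ℝ (Fin m) → EuclideanSpace ℝ (Fin m))
    (x y : EuclideanSpace ℝ (Fin m)) : Prop :=
  ∀ ε ∈ Icc (0:ℝ) 1,
    (inner ℝ x (c (pathPt x y ε)) : ℝ) ≤ inner ℝ y (c (pathPt x y ε))

/-- The strict part `x ≺_c y` of the linear vector polyorder. -/
def vecLt {m : ℕ} (c : EuclideanSpace ℝ (Fin m) → EuclideanSpace ℝ (Fin m))
    (x y : EuclideanSpace ℝ (Fin m)) : Prop :=
  vecLe c x y ∧ ¬ vecLe c y x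

/-- `x*` is `⪯_c`-minimal in `X`: no element of `X` strictly dominates it. -/
def vecMinimal {m : ℕ} (X : Set (EuclideanSpace ℝ (Fin m)))
    (c : EuclideanSpace ℝ (Fin m) → EuclideanSpace ℝ (Fin m))
    (xs : EuclideanSpace ℝ (Fin m)) : Prop :=
  ∀ x ∈ X, ¬ vecLt c x xs

/-- `Xs` is an evolutionarily stable set of `(X, c)`. -/
def IsESSet {m : ℕ} (X : Set (EuclideanSpace ℝ (Fin m)))
    (c : EuclideanSpace ℝ (Fin m) → EuclideanSpace ℝ (Fin m))
    (Xs : Set (EuclideanSpace ℝ (Fin m))) : Prop :=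
  Xs ⊆ X ∧ Xs.Nonempty ∧ IsClosed Xs ∧
    ∀ xs ∈ Xs, ∃ O : Set (EuclideanSpace ℝ (Fin m)), O ⊆ X ∧ O ∈ nhdsWithin xs X ∧
      ∀ x ∈ O, (inner ℝ xs (c x) : ℝ) ≤ inner ℝ x (c x) ∧
        (x ∉ Xs → (inner ℝ xs (c x) : ℝ) < inner ℝ x (c x))

/-- Every member of an evolutionarily stable set is `⪯_c`-minimal. -/
theorem mem_isESSet_vecMinimal {m : ℕ} (X : Set (EuclideanSpace ℝ (Fin m)))
    (hXne : X.Nonempty) (hXcl : IsClosed X) (hXconv : Convex ℝ X)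
    (c : EuclideanSpace ℝ (Fin m) → EuclideanSpace ℝ (Fin m)) (hc : ContinuousOn c X)
    (Xs : Set (EuclideanSpace ℝ (Fin m))) (hXs : IsESSet X c Xs)
    (xs : EuclideanSpace ℝ (Fin m)) (hxs : xs ∈ Xs) :
    vecMinimal X c xs := by
  rintro x hxX ⟨hle, hnle⟩
  apply hnle
  obtain ⟨hXsX, -, hXscl, hESS⟩ := hXs
  have hxsX : xs ∈ X := hXsX hxs
  set p : ℝ → EuclideanSpace ℝ (Fin m) := fun δ => pathPt x xs δ with hp
  have hpcont : Continuous p := by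
    simp only [hp, pathPt]
    continuity
  have hpmaps : MapsTo p (Icc 0 1) X := fun δ hδ =>
    hXconv hxX hxsX hδ.1 (by linarith [hδ.2]) (by ring)
  set f : ℝ → ℝ := fun δ => inner ℝ (xs - x) (c (p δ)) with hf
  have hfcont : ContinuousOn f (Icc 0 1) :=
    ContinuousOn.inner continuousOn_const (hc.comp hpcont.continuousOn hpmaps)
  have hfnonneg : ∀ δ ∈ Icc (0:ℝ) 1, 0 ≤ f δ := by
    intro δ hδ
    have h := hle δ hδ
    simp only [hf, inner_sub_left]
    linarith
  have hp0 : p 0 = xs := by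
    simp [hp, pathPt]
  -- the key local step, using the ESS property at a point of the path lying in Xs
  have step : ∀ s ∈ Icc (0:ℝ) 1, p s ∈ Xs →
      ∃ η > (0:ℝ), ∀ ε, s < ε → ε < s + η → ε ≤ 1 → f ε = 0 ∧ p ε ∈ Xs := by
    intro s hsI hpsXs
    obtain ⟨O, hOX, hOnhds, hO⟩ := hESS (p s) hpsXs
    have htd : Filter.Tendsto p (nhdsWithin s (Icc 0 1)) (nhdsWithin (p s) X) :=
      hpcont.continuousWithinAt.tendsto_nhdsWithin hpmaps
    have hpre : p ⁻¹' O ∈ nhdsWithin s (Icc 0 1) := htd hOnhds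
    rw [Metric.mem_nhdsWithin_iff] at hpre
    obtain ⟨η, hη, hball⟩ := hpre
    refine ⟨η, hη, fun ε hεs hεη hε1 => ?_⟩
    have hε0 : (0:ℝ) ≤ ε := le_of_lt (lt_of_le_of_lt hsI.1 hεs)
    have hεI : ε ∈ Icc (0:ℝ) 1 := ⟨hε0, hε1⟩
    have hmem : p ε ∈ O := by
      apply hball
      constructor
      · rw [Metric.mem_ball, Real.dist_eq, abs_lt]
        constructor <;> linarith
      · exact hεI
    obtain ⟨hle1, hlt1⟩ := hO (p ε) hmem
    have hdiff : p ε - p s = (ε - s) • (x - xs) := by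
      simp only [hp, pathPt]
      module
    have key : (inner ℝ (p ε) (c (p ε)) : ℝ) - inner ℝ (p s) (c (p ε)) = -((ε - s) * f ε) := by
      rw [← inner_sub_left, hdiff, real_inner_smul_left]
      simp only [hf, inner_sub_left]
      ring
    have hεspos : 0 < ε - s := by linarith
    have hfε : f ε = 0 := by
      have h1 : 0 ≤ -((ε - s) * f ε) := by rw [← key]; linarith
      have h2 : 0 ≤ f ε := hfnonneg ε hεI
      nlinarith
    refine ⟨hfε, ?_⟩
    by_contra hnot
    have := hlt1 hnot
    rw [show (inner ℝ (p ε) (c (p ε)) : ℝ) = inner ℝ (p s) (c (p ε)) by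
      have : -((ε - s) * f ε) = 0 := by rw [hfε]; ring
      linarith [key, this]] at this
    exact lt_irrefl _ this
  -- the continuation set
  set T : Set ℝ := {t | t ∈ Icc (0:ℝ) 1 ∧ ∀ δ, 0 < δ → δ ≤ t → f δ = 0 ∧ p δ ∈ Xs} with hT
  have h0T : (0:ℝ) ∈ T := ⟨⟨le_refl 0, zero_le_one⟩, fun δ h1 h2 => absurd (h1.trans_le h2) (lt_irrefl 0)⟩
  have hTne : T.Nonempty := ⟨0, h0T⟩
  have hbdd : BddAbove T := ⟨1, fun t ht => ht.1.2⟩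
  set s := sSup T with hsdef
  have hs0 : (0:ℝ) ≤ s := le_csSup hbdd h0T
  have hs1 : s ≤ 1 := csSup_le hTne (fun t ht => ht.1.2)
  have hlt : ∀ δ, 0 < δ → δ < s → f δ = 0 ∧ p δ ∈ Xs := by
    intro δ h1 h2
    obtain ⟨t, htT, hδt⟩ := exists_lt_of_lt_csSup hTne h2
    exact htT.2 δ h1 hδt.le
  -- limits at s when s > 0
  have hIooclos : 0 < s → s ∈ closure (Ioo (0:ℝ) s) := by
    intro h
    rw [closure_Ioo (ne_of_lt h)]
    exact ⟨h.le, le_refl s⟩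
  have hnebot : 0 < s → (nhdsWithin s (Ioo (0:ℝ) s)).NeBot := fun h =>
    mem_closure_iff_nhdsWithin_neBot.mp (hIooclos h)
  have hIoosub : Ioo (0:ℝ) s ⊆ Icc 0 1 := fun δ hδ => ⟨hδ.1.le, le_trans hδ.2.le hs1⟩
  have hpsXs : p s ∈ Xs := by
    rcases eq_or_lt_of_le hs0 with h | h
    · rw [← h, hp0]; exact hxs
    · have := hnebot h
      refine hXscl.mem_of_tendsto
        (Filter.Tendsto.mono_left (hpcont.tendsto s)
          (nhdsWithin_le_nhds : nhdsWithin s (Ioo (0:ℝ) s) ≤ _)) ?_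
      filter_upwards [self_mem_nhdsWithin] with δ hδ
      exact (hlt δ hδ.1 hδ.2).2
  have hfs : 0 < s → f s = 0 := by
    intro h
    have := hnebot h
    have htdf : Filter.Tendsto f (nhdsWithin s (Ioo 0 s)) (nhds (f s)) :=
      (hfcont s ⟨hs0, hs1⟩).mono hIoosub
    have htd0 : Filter.Tendsto f (nhdsWithin s (Ioo 0 s)) (nhds 0) := by
      apply Filter.Tendsto.congr' _ tendsto_const_nhds
      filter_upwards [self_mem_nhdsWithin] with δ hδ
      exact ((hlt δ hδ.1 hδ.2).1).symm
    exact (tendsto_nhds_unique htdf htd0)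
  have hles : ∀ δ, 0 < δ → δ ≤ s → f δ = 0 ∧ p δ ∈ Xs := by
    intro δ h1 h2
    rcases lt_or_eq_of_le h2 with h | h
    · exact hlt δ h1 h
    · subst h
      exact ⟨hfs h1, hpsXs⟩
  -- s must equal 1
  have hseq : s = 1 := by
    by_contra hne
    have hslt : s < 1 := lt_of_le_of_ne hs1 hne
    obtain ⟨η, hη, hstep⟩ := step s ⟨hs0, hs1⟩ hpsXs
    set t := min (s + η / 2) 1 with htdef
    have hts : s < t := lt_min (by linarith) hslt
    have htT : t ∈ T := by
      refine ⟨⟨le_min (by linarith) zero_le_one, min_le_right _ _⟩, ?_⟩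
      intro δ h1 h2
      rcases le_or_gt δ s with h | h
      · exact hles δ h1 h
      · refine hstep δ h ?_ ?_
        · have : t ≤ s + η / 2 := min_le_left _ _
          linarith
        · exact le_trans h2 (min_le_right _ _)
    have := le_csSup hbdd htT
    linarith
  -- conclude: f vanishes on [0,1]
  have hIoo : ∀ δ ∈ Ioo (0:ℝ) 1, f δ = 0 := fun δ hδ => (hlt δ hδ.1 (hseq ▸ hδ.2)).1
  have hall : ∀ δ ∈ Icc (0:ℝ) 1, f δ = 0 := by
    intro t ht
    have htc : t ∈ closure (Ioo (0:ℝ) 1) := by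
      rw [closure_Ioo one_ne_zero.symm]; exact ht
    have : (nhdsWithin t (Ioo (0:ℝ) 1)).NeBot := mem_closure_iff_nhdsWithin_neBot.mp htc
    have htdf : Filter.Tendsto f (nhdsWithin t (Ioo 0 1)) (nhds (f t)) :=
      (hfcont t ht).mono Ioo_subset_Icc_self
    have htd0 : Filter.Tendsto f (nhdsWithin t (Ioo 0 1)) (nhds 0) := by
      apply Filter.Tendsto.congr' _ tendsto_const_nhds
      filter_upwards [self_mem_nhdsWithin] with δ hδ
      exact (hIoo δ hδ).symm
    exact tendsto_nhds_unique htdf htd0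
  -- translate back to vecLe c xs x
  intro ε hε
  have hpath : pathPt xs x ε = p (1 - ε) := by
    simp only [hp, pathPt]
    module
  have h0 : f (1 - ε) = 0 := hall (1 - ε) ⟨by linarith [hε.2], by linarith [hε.1]⟩
  rw [hpath]
  simp only [hf, inner_sub_left] at h0
  linarith
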